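/- Let (H, ‖·‖) be a normed vector space, δ > 0, and J : B_H(θ, 2δ) → ℝ continuous and continuously directionally differentiable with J(θ) = 0 and DJ(θ) = 0. Suppose DJ(x)x > p(‖x‖) for all x ∈ closed ball B̄_H(θ,δ)\{θ}, where p : (0,δ] → (0,∞) is non-decreasing. Then for every x with ‖x‖ = δ, one has J(x) > p(δ/2)/2. -/

import Mathlib

/-- If `J` is continuous and continuously directionally differentiable on the ball
`B(θ, 2δ)` of a normed space, `J(θ) = 0`, `DJ(θ) = 0`, and `DJ(x)x > p(‖x‖)` on the
punctured closed ball of radius `δ` with `p : (0,δ] → (0,∞)` non-decreasing, then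
`J(x) > p(δ/2)/2` for every `x` with `‖x‖ = δ`. -/
theorem statement12 {H : Type*} [NormedAddCommGroup H] [NormedSpace ℝ H]
    (δ : ℝ) (hδ : 0 < δ) (J : H → ℝ) (DJ : H → H → ℝ)
    (hJc : ContinuousOn J (Metric.ball 0 (2 * δ)))
    (hdiff : ∀ x ∈ Metric.ball (0 : H) (2 * δ), ∀ u : H,
      Filter.Tendsto (fun t : ℝ => t⁻¹ * (J (x + t • u) - J x))
        (nhdsWithin 0 {(0 : ℝ)}ᶜ) (nhds (DJ x u)))
    (hDcont : ContinuousOn (fun q : H × H => DJ q.1 q.2)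
      (Metric.ball 0 (2 * δ) ×ˢ Set.univ))
    (hJ0 : J 0 = 0) (hDJ0 : ∀ u : H, DJ 0 u = 0)
    (p : ℝ → ℝ)
    (hp_pos : ∀ t ∈ Set.Ioc (0 : ℝ) δ, 0 < p t)
    (hp_mono : ∀ s t : ℝ, s ∈ Set.Ioc (0 : ℝ) δ → t ∈ Set.Ioc (0 : ℝ) δ →
      s ≤ t → p s ≤ p t)
    (hbound : ∀ x : H, ‖x‖ ≤ δ → x ≠ 0 → p ‖x‖ < DJ x x) :
    ∀ x : H, ‖x‖ = δ → p (δ / 2) / 2 < J x := by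
  intro x hx
  have hx0 : x ≠ 0 := by
    intro h
    rw [h, norm_zero] at hx
    linarith
  -- membership of t • x in the ball for t ∈ [0,1]
  have hmem : ∀ t : ℝ, t ∈ Set.Icc (0:ℝ) 1 → t • x ∈ Metric.ball (0:H) (2*δ) := by
    intro t ht
    rw [Metric.mem_ball, dist_zero_right, norm_smul, hx, Real.norm_eq_abs,
      abs_of_nonneg ht.1]
    nlinarith [ht.2]
  -- homogeneity of the directional derivative
  have homog : ∀ y ∈ Metric.ball (0:H) (2*δ), ∀ c : ℝ, 0 < c → ∀ u : H,
      DJ y (c • u) = c * DJ y u := by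
    intro y hy c hc u
    have h1 := hdiff y hy (c • u)
    have h2 := hdiff y hy u
    have hmap : Filter.Tendsto (fun t : ℝ => c * t)
        (nhdsWithin 0 {(0:ℝ)}ᶜ) (nhdsWithin 0 {(0:ℝ)}ᶜ) := by
      apply tendsto_nhdsWithin_of_tendsto_nhds_of_eventually_within
      · exact ((continuous_mul_left c).tendsto' 0 0 (by ring)).mono_left nhdsWithin_le_nhds
      · filter_upwards [self_mem_nhdsWithin] with t ht
        simp only [Set.mem_compl_iff, Set.mem_singleton_iff] at ht ⊢
        exact mul_ne_zero (ne_of_gt hc) ht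
    have h3 : Filter.Tendsto
        (fun t : ℝ => c * ((c * t)⁻¹ * (J (y + (c * t) • u) - J y)))
        (nhdsWithin 0 {(0:ℝ)}ᶜ) (nhds (c * DJ y u)) :=
      (h2.comp hmap).const_mul c
    have heq : (fun t : ℝ => c * ((c * t)⁻¹ * (J (y + (c * t) • u) - J y)))
        =ᶠ[nhdsWithin 0 {(0:ℝ)}ᶜ] (fun t : ℝ => t⁻¹ * (J (y + t • (c • u)) - J y)) := by
      filter_upwards [self_mem_nhdsWithin] with t ht
      simp only [Set.mem_compl_iff, Set.mem_singleton_iff] at ht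
      rw [mul_inv, smul_smul]
      field_simp
    exact tendsto_nhds_unique h1 (h3.congr' heq)
  -- g t = J (t • x)
  set g : ℝ → ℝ := fun t => J (t • x) with hg
  have hcont : ContinuousOn g (Set.Icc (0:ℝ) 1) := by
    apply hJc.comp (Continuous.continuousOn (by continuity))
    intro t ht
    exact hmem t ht
  have hderiv : ∀ t ∈ Set.Ioo (0:ℝ) 1, HasDerivAt g (DJ (t • x) x) t := by
    intro t ht
    have hmemt : t • x ∈ Metric.ball (0:H) (2*δ) := hmem t ⟨le_of_lt ht.1, le_of_lt ht.2⟩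
    have key := hdiff (t • x) hmemt x
    rw [hasDerivAt_iff_tendsto_slope]
    have hmap : Filter.Tendsto (fun s : ℝ => s - t)
        (nhdsWithin t {t}ᶜ) (nhdsWithin 0 {(0:ℝ)}ᶜ) := by
      apply tendsto_nhdsWithin_of_tendsto_nhds_of_eventually_within
      · exact ((continuous_sub_right t).tendsto' t 0 (by ring)).mono_left nhdsWithin_le_nhds
      · filter_upwards [self_mem_nhdsWithin] with s hs
        simp only [Set.mem_compl_iff, Set.mem_singleton_iff] at hs ⊢
        exact sub_ne_zero_of_ne hs
    have h3 := key.comp hmap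
    apply h3.congr'
    filter_upwards [self_mem_nhdsWithin] with s hs
    simp only [Function.comp, slope_def_field, div_eq_inv_mul]
    have : t • x + (s - t) • x = s • x := by
      rw [← add_smul]; congr 1; ring
    rw [this]
  -- MVT on [0, 1/2]
  have mvt1 := exists_hasDerivAt_eq_slope g (fun t => DJ (t • x) x)
    (show (0:ℝ) < 1/2 by norm_num)
    (hcont.mono (Set.Icc_subset_Icc le_rfl (by norm_num)))
    (fun t ht => hderiv t ⟨ht.1, lt_trans ht.2 (by norm_num)⟩)
  obtain ⟨s₁, hs₁, hd1⟩ := mvt1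
  replace hd1 : DJ (s₁ • x) x = (g (1/2) - g 0) / (1/2 - 0) := hd1
  -- MVT on [1/2, 1]
  have mvt2 := exists_hasDerivAt_eq_slope g (fun t => DJ (t • x) x)
    (show (1:ℝ)/2 < 1 by norm_num)
    (hcont.mono (Set.Icc_subset_Icc (by norm_num) le_rfl))
    (fun t ht => hderiv t ⟨lt_trans (by norm_num) ht.1, ht.2⟩)
  obtain ⟨s₂, hs₂, hd2⟩ := mvt2
  replace hd2 : DJ (s₂ • x) x = (g 1 - g (1/2)) / (1 - 1/2) := hd2
  -- key estimate: for s ∈ (0,1), DJ (s•x) x > p (s*δ)/s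
  have key : ∀ s : ℝ, 0 < s → s < 1 → p (s * δ) / s < DJ (s • x) x := by
    intro s hs0 hs1
    have hsx0 : s • x ≠ 0 := smul_ne_zero (ne_of_gt hs0) hx0
    have hnorm : ‖s • x‖ = s * δ := by
      rw [norm_smul, Real.norm_eq_abs, abs_of_pos hs0, hx]
    have hle : ‖s • x‖ ≤ δ := by rw [hnorm]; nlinarith
    have hb := hbound (s • x) hle hsx0
    rw [hnorm] at hb
    have hhom : DJ (s • x) (s • x) = s * DJ (s • x) x :=
      homog (s • x) (hmem s ⟨le_of_lt hs0, le_of_lt hs1⟩) s hs0 x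
    rw [hhom] at hb
    rw [div_lt_iff₀ hs0]
    linarith [hb]
  have hpδ2 : 0 < p (δ / 2) := hp_pos (δ/2) ⟨by linarith, by linarith⟩
  -- g(1/2) > 0
  have hg0 : g 0 = 0 := by simp [hg, hJ0]
  have hghalf : 0 < g (1/2) := by
    have h1 := key s₁ hs₁.1 (lt_trans hs₁.2 (by norm_num))
    have hp1 : 0 < p (s₁ * δ) := hp_pos (s₁ * δ)
      ⟨mul_pos hs₁.1 hδ, by nlinarith [hs₁.2]⟩
    have hpos : 0 < DJ (s₁ • x) x := lt_trans (div_pos hp1 hs₁.1) h1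
    rw [hd1, hg0] at hpos
    have : (g (1/2) - 0) / (1/2 - 0) = 2 * g (1/2) := by ring
    rw [this] at hpos
    linarith
  -- g 1 - g (1/2) = DJ(s₂ x) x / 2 > p(δ/2)/2
  have h2 := key s₂ (lt_trans (by norm_num) hs₂.1) hs₂.2
  have hmono : p (δ / 2) ≤ p (s₂ * δ) := by
    apply hp_mono
    · exact ⟨by linarith, by linarith⟩
    · constructor
      · exact mul_pos (lt_trans (by norm_num) hs₂.1) hδ
      · nlinarith [hs₂.2]
    · nlinarith [hs₂.1]
  have hDJ2 : p (δ / 2) < DJ (s₂ • x) x := by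
    have hs20 : (0:ℝ) < s₂ := lt_trans (by norm_num) hs₂.1
    have : p (δ/2) / s₂ ≤ p (s₂ * δ) / s₂ := by gcongr
    have h4 : p (δ/2) < p (δ/2) / s₂ := by
      rw [lt_div_iff₀ hs20]
      nlinarith [hs₂.2, hpδ2]
    calc p (δ/2) < p (δ/2) / s₂ := h4
      _ ≤ p (s₂ * δ) / s₂ := this
      _ < DJ (s₂ • x) x := h2
  rw [hd2] at hDJ2
  have hslope : (g 1 - g (1/2)) / (1 - 1/2) = 2 * (g 1 - g (1/2)) := by ring
  rw [hslope] at hDJ2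
  have hg1 : g 1 = J x := by simp [hg]
  rw [hg1] at hDJ2
  linarith
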